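/- Let F_n be the number of 3-bounded anchored permutations of [n], G_n the number of 3-bounded permutations π of [n] with π(1) ∈ {1,2} and π(n) = n, and H_n the number of 3-bounded permutations π of [n] with π(1) = 3, π(n) = n, whose first five entries are not 3,1,4,2,5. Then for all n ≥ 6, F_n = G_{n-1} + H_{n-1} + F_{n-5}. -/

import Mathlib

/-- A permutation of `Fin n` (representing `{1,…,n}` zero-indexed) is `k`-bounded
if consecutive entries differ by at most `k`. -/
def IsKBounded (k n : ℕ) (π : Equiv.Perm (Fin n)) : Prop :=
  ∀ i j : Fin n, (j : ℕ) = (i : ℕ) + 1 →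
    (((π j : ℕ) : ℤ) - ((π i : ℕ) : ℤ)).natAbs ≤ k

/-- Anchored: first entry is `1` and last entry is `n` (zero-indexed: fixes `0` and `n-1`). -/
def IsAnchored (n : ℕ) (π : Equiv.Perm (Fin n)) : Prop :=
  ∀ i : Fin n, ((i : ℕ) = 0 → π i = i) ∧ ((i : ℕ) = n - 1 → π i = i)

/-- The number of `k`-bounded anchored permutations of `{1,…,n}`. -/
noncomputable def numAnchored (k n : ℕ) : ℕ :=
  Nat.card {π : Equiv.Perm (Fin n) // IsKBounded k n π ∧ IsAnchored n π}

/-- `numF n` = number of 3-bounded anchored permutations of `{1,…,n}`. -/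
noncomputable def numF (n : ℕ) : ℕ := numAnchored 3 n

/-- `numG n` = number of 3-bounded permutations of `{1,…,n}` starting at `1` or `2`
(zero-indexed value `0` or `1`) and ending at `n`. -/
noncomputable def numG (n : ℕ) : ℕ :=
  Nat.card {π : Equiv.Perm (Fin n) // IsKBounded 3 n π ∧
    (∀ i : Fin n, (i : ℕ) = 0 → ((π i : ℕ) = 0 ∨ (π i : ℕ) = 1)) ∧
    (∀ i : Fin n, (i : ℕ) = n - 1 → π i = i)}

/-- The first five entries are the Joker `3,1,4,2,5` (zero-indexed values `2,0,3,1,4`). -/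
def StartsWithJoker (n : ℕ) (π : Equiv.Perm (Fin n)) : Prop :=
  ∃ h : 5 ≤ n, (π ⟨0, by omega⟩ : ℕ) = 2 ∧ (π ⟨1, by omega⟩ : ℕ) = 0 ∧
    (π ⟨2, by omega⟩ : ℕ) = 3 ∧ (π ⟨3, by omega⟩ : ℕ) = 1 ∧ (π ⟨4, by omega⟩ : ℕ) = 4

/-- `numH n` = number of 3-bounded permutations of `{1,…,n}` starting at `3`
(zero-indexed value `2`), ending at `n`, and not starting with the Joker. -/
noncomputable def numH (n : ℕ) : ℕ :=
  Nat.card {π : Equiv.Perm (Fin n) // IsKBounded 3 n π ∧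
    (∀ i : Fin n, (i : ℕ) = 0 → (π i : ℕ) = 2) ∧
    (∀ i : Fin n, (i : ℕ) = n - 1 → π i = i) ∧ ¬ StartsWithJoker n π}

lemma perm_val_ne {n : ℕ} (π : Equiv.Perm (Fin n)) {a b : Fin n} (h : (a : ℕ) ≠ (b : ℕ)) :
    (π a : ℕ) ≠ (π b : ℕ) :=
  fun he => h (congrArg Fin.val (π.injective (Fin.ext he)))

lemma isKBounded_iff_nat {k n : ℕ} (π : Equiv.Perm (Fin n)) :
    IsKBounded k n π ↔ ∀ m : ℕ, ∀ h : m + 1 < n,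
      (((π ⟨m + 1, h⟩ : ℕ) : ℤ) - ((π ⟨m, by omega⟩ : ℕ) : ℤ)).natAbs ≤ k := by
  constructor
  · intro H m h
    exact H ⟨m, by omega⟩ ⟨m + 1, h⟩ rfl
  · intro H i j hij
    have hj : (j : ℕ) < n := j.isLt
    have hji : j = ⟨(i : ℕ) + 1, by omega⟩ := Fin.ext hij
    rw [hji]
    exact H (i : ℕ) (by omega)

section Shift
variable {n s : ℕ}

def shiftFun (hsn : s < n) (π : Equiv.Perm (Fin n)) : Fin (n - s) → Fin (n - s) :=
  fun i => ⟨(π ⟨(i : ℕ) + s, by omega⟩ : ℕ) - s, by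
    have := (π ⟨(i : ℕ) + s, by omega⟩).isLt; omega⟩

noncomputable def shiftPerm (hsn : s < n) (π : Equiv.Perm (Fin n))
    (H : ∀ i : Fin n, s ≤ (i : ℕ) → s ≤ (π i : ℕ)) : Equiv.Perm (Fin (n - s)) :=
  Equiv.ofBijective (shiftFun hsn π)
    (Finite.injective_iff_bijective.mp (by
      intro i j hij
      have hi := H ⟨(i : ℕ) + s, by omega⟩ (by simp)
      have hj := H ⟨(j : ℕ) + s, by omega⟩ (by simp)
      have hv : ((π ⟨(i : ℕ) + s, by omega⟩ : Fin n) : ℕ) - s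
          = ((π ⟨(j : ℕ) + s, by omega⟩ : Fin n) : ℕ) - s := congrArg Fin.val hij
      have : ((π ⟨(i : ℕ) + s, by omega⟩ : Fin n) : ℕ)
          = ((π ⟨(j : ℕ) + s, by omega⟩ : Fin n) : ℕ) := by omega
      have := congrArg Fin.val (π.injective (Fin.ext this))
      exact Fin.ext (by simpa using this)))

lemma shiftPerm_apply (hsn : s < n) (π : Equiv.Perm (Fin n))
    (H : ∀ i : Fin n, s ≤ (i : ℕ) → s ≤ (π i : ℕ)) (i : Fin (n - s)) :
    (shiftPerm hsn π H i : ℕ) = (π ⟨(i : ℕ) + s, by omega⟩ : ℕ) - s := rfl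

def unshiftFun (hsn : s < n) (v : Fin s → Fin s) (σ : Equiv.Perm (Fin (n - s))) :
    Fin n → Fin n := fun i =>
  if h : (i : ℕ) < s then ⟨(v ⟨i, h⟩ : ℕ), by have := (v ⟨i, h⟩).isLt; omega⟩
  else ⟨(σ ⟨(i : ℕ) - s, by omega⟩ : ℕ) + s, by
    have := (σ ⟨(i : ℕ) - s, by omega⟩).isLt; omega⟩

noncomputable def unshiftPerm (hsn : s < n) (v : Fin s → Fin s) (hv : Function.Injective v)
    (σ : Equiv.Perm (Fin (n - s))) : Equiv.Perm (Fin n) :=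
  Equiv.ofBijective (unshiftFun hsn v σ)
    (Finite.injective_iff_bijective.mp (by
      intro i j hij
      unfold unshiftFun at hij
      by_cases hi : (i : ℕ) < s <;> by_cases hj : (j : ℕ) < s
      · rw [dif_pos hi, dif_pos hj] at hij
        have h1 : (v ⟨i, hi⟩ : ℕ) = (v ⟨j, hj⟩ : ℕ) := Fin.mk.inj hij
        have := congrArg Fin.val (hv (Fin.ext h1))
        exact Fin.ext (by simpa using this)
      · rw [dif_pos hi, dif_neg hj] at hij
        have h1 : (v ⟨i, hi⟩ : ℕ) = (σ ⟨(j : ℕ) - s, by omega⟩ : ℕ) + s :=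
          Fin.mk.inj hij
        have := (v ⟨i, hi⟩).isLt; omega
      · rw [dif_neg hi, dif_pos hj] at hij
        have h1 : (σ ⟨(i : ℕ) - s, by omega⟩ : ℕ) + s = (v ⟨j, hj⟩ : ℕ) :=
          Fin.mk.inj hij
        have := (v ⟨j, hj⟩).isLt; omega
      · rw [dif_neg hi, dif_neg hj] at hij
        have h1 : (σ ⟨(i : ℕ) - s, by omega⟩ : ℕ) + s
            = (σ ⟨(j : ℕ) - s, by omega⟩ : ℕ) + s := Fin.mk.inj hij
        have h2 : (σ ⟨(i : ℕ) - s, by omega⟩ : ℕ) = (σ ⟨(j : ℕ) - s, by omega⟩ : ℕ) := by omega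
        have := congrArg Fin.val (σ.injective (Fin.ext h2))
        simp only at this
        exact Fin.ext (by omega)))

lemma unshiftPerm_apply_lt (hsn : s < n) (v : Fin s → Fin s) (hv : Function.Injective v)
    (σ : Equiv.Perm (Fin (n - s))) (i : Fin n) (h : (i : ℕ) < s) :
    (unshiftPerm hsn v hv σ i : ℕ) = (v ⟨i, h⟩ : ℕ) := by
  show ((unshiftFun hsn v σ i : Fin n) : ℕ) = _
  unfold unshiftFun
  rw [dif_pos h]

lemma unshiftPerm_apply_ge (hsn : s < n) (v : Fin s → Fin s) (hv : Function.Injective v)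
    (σ : Equiv.Perm (Fin (n - s))) (i : Fin n) (h : s ≤ (i : ℕ)) :
    (unshiftPerm hsn v hv σ i : ℕ) = (σ ⟨(i : ℕ) - s, by omega⟩ : ℕ) + s := by
  show ((unshiftFun hsn v σ i : Fin n) : ℕ) = _
  unfold unshiftFun
  rw [dif_neg (by omega)]

lemma unshiftPerm_ge (hsn : s < n) (v : Fin s → Fin s) (hv : Function.Injective v)
    (σ : Equiv.Perm (Fin (n - s))) (i : Fin n) (h : s ≤ (i : ℕ)) :
    s ≤ (unshiftPerm hsn v hv σ i : ℕ) := by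
  rw [unshiftPerm_apply_ge hsn v hv σ i h]; omega

lemma fin_app_val_congr {k : ℕ} (f : Fin k → Fin k) {a b : Fin k} (h : (a : ℕ) = (b : ℕ)) :
    (f a : ℕ) = (f b : ℕ) := congrArg Fin.val (congrArg f (Fin.ext h))

lemma unshiftPerm_apply_lt' (hsn : s < n) (v : Fin s → Fin s) (hv : Function.Injective v)
    (σ : Equiv.Perm (Fin (n - s))) (m : ℕ) (h1 : m < s) (h2 : m < n) :
    (unshiftPerm hsn v hv σ ⟨m, h2⟩ : ℕ) = (v ⟨m, h1⟩ : ℕ) :=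
  unshiftPerm_apply_lt hsn v hv σ ⟨m, h2⟩ h1

lemma unshiftPerm_apply_ge' (hsn : s < n) (v : Fin s → Fin s) (hv : Function.Injective v)
    (σ : Equiv.Perm (Fin (n - s))) (m : ℕ) (h1 : s ≤ m) (h2 : m < n) :
    (unshiftPerm hsn v hv σ ⟨m, h2⟩ : ℕ) = (σ ⟨m - s, by omega⟩ : ℕ) + s :=
  unshiftPerm_apply_ge hsn v hv σ ⟨m, h2⟩ h1

lemma shiftPerm_apply' (hsn : s < n) (π : Equiv.Perm (Fin n))
    (H : ∀ i : Fin n, s ≤ (i : ℕ) → s ≤ (π i : ℕ)) (m : ℕ) (h : m < n - s) :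
    (shiftPerm hsn π H ⟨m, h⟩ : ℕ) = (π ⟨m + s, by omega⟩ : ℕ) - s := rfl

lemma unshift_shift (hsn : s < n) (π : Equiv.Perm (Fin n))
    (H : ∀ i : Fin n, s ≤ (i : ℕ) → s ≤ (π i : ℕ))
    (v : Fin s → Fin s) (hv : Function.Injective v)
    (hpre : ∀ (m : ℕ) (h : m < s), (π ⟨m, by omega⟩ : ℕ) = (v ⟨m, h⟩ : ℕ)) :
    unshiftPerm hsn v hv (shiftPerm hsn π H) = π := by
  apply Equiv.ext
  intro i
  apply Fin.ext
  by_cases h : (i : ℕ) < s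
  · rw [unshiftPerm_apply_lt hsn v hv _ i h]
    have := hpre (i : ℕ) h
    simpa using this.symm
  · rw [unshiftPerm_apply_ge hsn v hv _ i (by omega)]
    rw [shiftPerm_apply]
    have h2 : (⟨(i : ℕ) - s + s, by omega⟩ : Fin n) = i := Fin.ext (by simp; omega)
    rw [h2]
    have := H i (by omega)
    omega

lemma shift_unshift (hsn : s < n) (v : Fin s → Fin s) (hv : Function.Injective v)
    (σ : Equiv.Perm (Fin (n - s))) :
    shiftPerm hsn (unshiftPerm hsn v hv σ) (unshiftPerm_ge hsn v hv σ) = σ := by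
  apply Equiv.ext
  intro i
  apply Fin.ext
  rw [shiftPerm_apply]
  rw [unshiftPerm_apply_ge hsn v hv σ _ (by simp)]
  have h2 : (⟨(i : ℕ) + s - s, by omega⟩ : Fin (n - s)) = i := Fin.ext (by simp)
  rw [h2]
  omega

attribute [irreducible] shiftPerm unshiftPerm

end Shift

section Bounded
variable {n s : ℕ}

lemma shift_bounded (hsn : s < n) (π : Equiv.Perm (Fin n))
    (H : ∀ i : Fin n, s ≤ (i : ℕ) → s ≤ (π i : ℕ))
    (hb : IsKBounded 3 n π) : IsKBounded 3 (n - s) (shiftPerm hsn π H) := by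
  rw [isKBounded_iff_nat]
  intro m h
  rw [isKBounded_iff_nat] at hb
  have hb1 := hb (m + s) (by omega)
  have e1 : (shiftPerm hsn π H ⟨m + 1, h⟩ : ℕ) = (π ⟨m + 1 + s, by omega⟩ : ℕ) - s :=
    shiftPerm_apply hsn π H _
  have e2 : (shiftPerm hsn π H ⟨m, by omega⟩ : ℕ) = (π ⟨m + s, by omega⟩ : ℕ) - s :=
    shiftPerm_apply hsn π H _
  have e3 : (π ⟨m + 1 + s, by omega⟩ : ℕ) = (π ⟨m + s + 1, by omega⟩ : ℕ) :=
    congrArg (fun x => (π x : ℕ)) (Fin.ext (by show m + 1 + s = m + s + 1; omega))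
  have g1 : s ≤ (π ⟨m + s, by omega⟩ : ℕ) := H ⟨m + s, by omega⟩ (by show s ≤ m + s; omega)
  have g2 : s ≤ (π ⟨m + s + 1, by omega⟩ : ℕ) :=
    H ⟨m + s + 1, by omega⟩ (by show s ≤ m + s + 1; omega)
  omega

lemma unshift_bounded (hsn : s < n) (hs0 : 0 < s) (v : Fin s → Fin s)
    (hv : Function.Injective v) (σ : Equiv.Perm (Fin (n - s)))
    (hσ : IsKBounded 3 (n - s) σ)
    (hpre : ∀ (m : ℕ) (h : m + 1 < s),
      (((v ⟨m + 1, h⟩ : ℕ) : ℤ) - ((v ⟨m, by omega⟩ : ℕ) : ℤ)).natAbs ≤ 3)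
    (hseam : ((((σ ⟨0, by omega⟩ : ℕ) + s : ℕ) : ℤ) - ((v ⟨s - 1, by omega⟩ : ℕ) : ℤ)).natAbs ≤ 3) :
    IsKBounded 3 n (unshiftPerm hsn v hv σ) := by
  rw [isKBounded_iff_nat]
  intro m h
  rcases lt_trichotomy (m + 1) s with hc | hc | hc
  · have e1 : (unshiftPerm hsn v hv σ ⟨m + 1, h⟩ : ℕ) = (v ⟨m + 1, hc⟩ : ℕ) :=
      unshiftPerm_apply_lt' hsn v hv σ (m + 1) hc h
    have e2 : (unshiftPerm hsn v hv σ ⟨m, by omega⟩ : ℕ) = (v ⟨m, by omega⟩ : ℕ) :=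
      unshiftPerm_apply_lt' hsn v hv σ m (by omega) (by omega)
    have := hpre m hc
    omega
  · have e1 : (unshiftPerm hsn v hv σ ⟨m + 1, h⟩ : ℕ) = (σ ⟨m + 1 - s, by omega⟩ : ℕ) + s :=
      unshiftPerm_apply_ge' hsn v hv σ (m + 1) (by omega) h
    have e2 : (unshiftPerm hsn v hv σ ⟨m, by omega⟩ : ℕ) = (v ⟨m, by omega⟩ : ℕ) :=
      unshiftPerm_apply_lt' hsn v hv σ m (by omega) (by omega)
    have e3 : (σ ⟨m + 1 - s, by omega⟩ : ℕ) = (σ ⟨0, by omega⟩ : ℕ) :=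
      fin_app_val_congr σ (a := ⟨m + 1 - s, by omega⟩) (b := ⟨0, by omega⟩)
        (by show m + 1 - s = 0; omega)
    have e4 : (v ⟨m, by omega⟩ : ℕ) = (v ⟨s - 1, by omega⟩ : ℕ) :=
      fin_app_val_congr v (a := ⟨m, by omega⟩) (b := ⟨s - 1, by omega⟩)
        (by show m = s - 1; omega)
    omega
  · have e1 : (unshiftPerm hsn v hv σ ⟨m + 1, h⟩ : ℕ) = (σ ⟨m + 1 - s, by omega⟩ : ℕ) + s :=
      unshiftPerm_apply_ge' hsn v hv σ (m + 1) (by omega) h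
    have e2 : (unshiftPerm hsn v hv σ ⟨m, by omega⟩ : ℕ) = (σ ⟨m - s, by omega⟩ : ℕ) + s :=
      unshiftPerm_apply_ge' hsn v hv σ m (by omega) (by omega)
    have e3 : (σ ⟨m + 1 - s, by omega⟩ : ℕ) = (σ ⟨m - s + 1, by omega⟩ : ℕ) :=
      fin_app_val_congr σ (a := ⟨m + 1 - s, by omega⟩) (b := ⟨m - s + 1, by omega⟩)
        (by show m + 1 - s = m - s + 1; omega)
    rw [isKBounded_iff_nat] at hσ
    have hb1 := hσ (m - s) (by omega)
    omega

end Bounded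

section Split

lemma nat_card_or {α : Type*} [Finite α] {p q : α → Prop} (h : ∀ x, p x → q x → False) :
    Nat.card {x // p x ∨ q x} = Nat.card {x // p x} + Nat.card {x // q x} := by
  classical
  cases nonempty_fintype α
  simp only [Nat.card_eq_fintype_card]
  refine Fintype.card_subtype_or_disjoint p q ?_
  intro r hrp hrq x hx
  exact (h x (hrp x hx) (hrq x hx)).elim

lemma nat_card_split3 {α : Type*} [Finite α] (a p1 p2 p3 : α → Prop)
    (hcov : ∀ x, a x → p1 x ∨ p2 x ∨ p3 x)
    (h12 : ∀ x, p1 x → p2 x → False) (h13 : ∀ x, p1 x → p3 x → False)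
    (h23 : ∀ x, p2 x → p3 x → False) :
    Nat.card {x // a x} = Nat.card {x // a x ∧ p1 x} + Nat.card {x // a x ∧ p2 x}
      + Nat.card {x // a x ∧ p3 x} := by
  classical
  have e : Nat.card {x // a x}
      = Nat.card {x // (a x ∧ p1 x) ∨ ((a x ∧ p2 x) ∨ (a x ∧ p3 x))} :=
    Nat.card_congr (Equiv.subtypeEquivRight (fun x => by
      constructor
      · intro hx
        rcases hcov x hx with h | h | h
        exacts [Or.inl ⟨hx, h⟩, Or.inr (Or.inl ⟨hx, h⟩), Or.inr (Or.inr ⟨hx, h⟩)]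
      · rintro (⟨h, _⟩ | ⟨h, _⟩ | ⟨h, _⟩) <;> exact h))
  have d1 : ∀ x, (a x ∧ p1 x) → ((a x ∧ p2 x) ∨ (a x ∧ p3 x)) → False := by
    rintro x ⟨_, h1⟩ (⟨_, h2⟩ | ⟨_, h3⟩)
    exacts [h12 x h1 h2, h13 x h1 h3]
  have d2 : ∀ x, (a x ∧ p2 x) → (a x ∧ p3 x) → False := by
    rintro x ⟨_, h2⟩ ⟨_, h3⟩; exact h23 x h2 h3
  rw [e, nat_card_or d1, nat_card_or d2]
  omega

end Split

section Conds

lemma forall_fin_eq_iff {n : ℕ} (m : ℕ) (hm : m < n) (P : Fin n → Prop) :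
    (∀ i : Fin n, (i : ℕ) = m → P i) ↔ P ⟨m, hm⟩ := by
  constructor
  · intro h; exact h _ rfl
  · intro h i hi
    have : i = ⟨m, hm⟩ := Fin.ext hi
    rw [this]; exact h

lemma isAnchored_iff {n : ℕ} (hn : 1 ≤ n) (π : Equiv.Perm (Fin n)) :
    IsAnchored n π ↔ (π ⟨0, by omega⟩ : ℕ) = 0 ∧ (π ⟨n - 1, by omega⟩ : ℕ) = n - 1 := by
  constructor
  · intro h
    refine ⟨congrArg Fin.val ((h ⟨0, by omega⟩).1 rfl), congrArg Fin.val ((h ⟨n - 1, by omega⟩).2 rfl)⟩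
  · intro ⟨h1, h2⟩ i
    constructor
    · intro hi
      have : i = ⟨0, by omega⟩ := Fin.ext hi
      rw [this]; exact Fin.ext h1
    · intro hi
      have : i = ⟨n - 1, by omega⟩ := Fin.ext hi
      rw [this]; exact Fin.ext h2

end Conds

section Case1

def v1 : Fin 1 → Fin 1 := fun _ => ⟨0, by omega⟩

lemma v1_inj : Function.Injective v1 := fun a b _ => Subsingleton.elim a b

lemma H1 {n : ℕ} (hn : 1 < n) (π : Equiv.Perm (Fin n)) (h0 : (π ⟨0, by omega⟩ : ℕ) = 0) :
    ∀ i : Fin n, 1 ≤ (i : ℕ) → 1 ≤ (π i : ℕ) := by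
  intro i hi
  have := perm_val_ne π (a := i) (b := ⟨0, by omega⟩) (by show (i : ℕ) ≠ 0; omega)
  omega

noncomputable def equivG (n : ℕ) (hn : 6 ≤ n) :
    {π : Equiv.Perm (Fin n) //
      (IsKBounded 3 n π ∧ IsAnchored n π) ∧ (π ⟨1, by omega⟩ : ℕ) ≤ 2} ≃
    {σ : Equiv.Perm (Fin (n - 1)) // IsKBounded 3 (n - 1) σ ∧
      (∀ i : Fin (n - 1), (i : ℕ) = 0 → ((σ i : ℕ) = 0 ∨ (σ i : ℕ) = 1)) ∧
      (∀ i : Fin (n - 1), (i : ℕ) = n - 1 - 1 → σ i = i)} where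
  toFun x := ⟨shiftPerm (by omega : 1 < n) x.1
      (H1 (by omega) x.1 (((isAnchored_iff (by omega) x.1).mp x.2.1.2).1)), by
    have hb := x.2.1.1
    have h0 := ((isAnchored_iff (by omega) x.1).mp x.2.1.2).1
    have hl := ((isAnchored_iff (by omega) x.1).mp x.2.1.2).2
    have hp := x.2.2
    set H := H1 (by omega : 1 < n) x.1 (((isAnchored_iff (by omega) x.1).mp x.2.1.2).1) with hH
    refine ⟨shift_bounded _ x.1 H hb, ?_, ?_⟩
    · rw [forall_fin_eq_iff 0 (by omega)]
      have e := shiftPerm_apply' (by omega : 1 < n) x.1 H 0 (by omega)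
      have e2 : (x.1 ⟨0 + 1, by omega⟩ : ℕ) = (x.1 ⟨1, by omega⟩ : ℕ) :=
        fin_app_val_congr x.1 (by show 0 + 1 = 1; omega)
      have hge := H ⟨1, by omega⟩ (by show 1 ≤ 1; omega)
      omega
    · rw [forall_fin_eq_iff (n - 1 - 1) (by omega)]
      apply Fin.ext
      have e := shiftPerm_apply' (by omega : 1 < n) x.1 H (n - 1 - 1) (by omega)
      have e2 : (x.1 ⟨n - 1 - 1 + 1, by omega⟩ : ℕ) = (x.1 ⟨n - 1, by omega⟩ : ℕ) :=
        fin_app_val_congr x.1 (by show n - 1 - 1 + 1 = n - 1; omega)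
      show _ = n - 1 - 1
      omega⟩
  invFun y := ⟨unshiftPerm (by omega : 1 < n) v1 v1_inj y.1, by
    have hb := y.2.1
    have hs0 := y.2.2.1 ⟨0, by omega⟩ rfl
    have hel : (y.1 ⟨n - 1 - 1, by omega⟩ : ℕ) = n - 1 - 1 :=
      congrArg Fin.val (y.2.2.2 ⟨n - 1 - 1, by omega⟩ rfl)
    have hbd : IsKBounded 3 n (unshiftPerm (by omega : 1 < n) v1 v1_inj y.1) := by
      refine unshift_bounded _ (by omega) v1 v1_inj y.1 hb (by intro m hm; omega) ?_
      show ((((y.1 ⟨0, by omega⟩ : ℕ) + 1 : ℕ) : ℤ) - ((0 : ℕ) : ℤ)).natAbs ≤ 3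
      omega
    have e0 : (unshiftPerm (by omega : 1 < n) v1 v1_inj y.1 ⟨0, by omega⟩ : ℕ) = (0 : ℕ) :=
      unshiftPerm_apply_lt' _ v1 v1_inj y.1 0 (by omega) (by omega)
    have el : (unshiftPerm (by omega : 1 < n) v1 v1_inj y.1 ⟨n - 1, by omega⟩ : ℕ)
        = (y.1 ⟨n - 1 - 1, by omega⟩ : ℕ) + 1 :=
      unshiftPerm_apply_ge' _ v1 v1_inj y.1 (n - 1) (by omega) (by omega)
    have e1 : (unshiftPerm (by omega : 1 < n) v1 v1_inj y.1 ⟨1, by omega⟩ : ℕ)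
        = (y.1 ⟨1 - 1, by omega⟩ : ℕ) + 1 :=
      unshiftPerm_apply_ge' _ v1 v1_inj y.1 1 (by omega) (by omega)
    have e1' : (y.1 ⟨1 - 1, by omega⟩ : ℕ) = (y.1 ⟨0, by omega⟩ : ℕ) :=
      fin_app_val_congr y.1 (by show 1 - 1 = 0; omega)
    refine ⟨⟨hbd, ?_⟩, ?_⟩
    · rw [isAnchored_iff (by omega)]
      exact ⟨e0, by omega⟩
    · omega⟩
  left_inv x := by
    apply Subtype.ext
    refine unshift_shift (by omega : 1 < n) x.1
      (H1 (by omega) x.1 (((isAnchored_iff (by omega) x.1).mp x.2.1.2).1)) v1 v1_inj ?_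
    intro m hm
    have hm0 : m = 0 := by omega
    subst hm0
    exact ((isAnchored_iff (by omega) x.1).mp x.2.1.2).1
  right_inv y := by
    apply Subtype.ext
    exact shift_unshift (by omega : 1 < n) v1 v1_inj y.1

end Case1

section Case2

set_option maxHeartbeats 1000000 in
lemma fwdH (n : ℕ) (hn : 6 ≤ n) (π : Equiv.Perm (Fin n))
    (H : ∀ i : Fin n, 1 ≤ (i : ℕ) → 1 ≤ (π i : ℕ))
    (hb : IsKBounded 3 n π)
    (h0 : (π ⟨0, by omega⟩ : ℕ) = 0) (hl : (π ⟨n - 1, by omega⟩ : ℕ) = n - 1)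
    (hp1 : (π ⟨1, by omega⟩ : ℕ) = 3)
    (hp2 : ¬((π ⟨2, by omega⟩ : ℕ) = 1 ∧ (π ⟨3, by omega⟩ : ℕ) = 4 ∧
          (π ⟨4, by omega⟩ : ℕ) = 2 ∧ (π ⟨5, by omega⟩ : ℕ) = 5)) :
    IsKBounded 3 (n - 1) (shiftPerm (by omega : 1 < n) π H) ∧
      (∀ i : Fin (n - 1), (i : ℕ) = 0 → (shiftPerm (by omega : 1 < n) π H i : ℕ) = 2) ∧
      (∀ i : Fin (n - 1), (i : ℕ) = n - 1 - 1 → shiftPerm (by omega : 1 < n) π H i = i) ∧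
      ¬ StartsWithJoker (n - 1) (shiftPerm (by omega : 1 < n) π H) := by
  have h1n : 1 < n := by omega
  have c0 : 0 < n - 1 := by omega
  have c1 : 1 < n - 1 := by omega
  have c2 : 2 < n - 1 := by omega
  have c3 : 3 < n - 1 := by omega
  have c4 : 4 < n - 1 := by omega
  have cl : n - 1 - 1 < n - 1 := by omega
  have d1 : 1 < n := by omega
  have d2 : 2 < n := by omega
  have d3 : 3 < n := by omega
  have d4 : 4 < n := by omega
  have d5 : 5 < n := by omega
  have dl : n - 1 < n := by omega
  have dm : n - 1 - 1 + 1 < n := by omega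
  have b01 : (0 : ℕ) + 1 = 1 := rfl
  have b11 : (1 : ℕ) + 1 = 2 := rfl
  have b21 : (2 : ℕ) + 1 = 3 := rfl
  have b31 : (3 : ℕ) + 1 = 4 := rfl
  have b41 : (4 : ℕ) + 1 = 5 := rfl
  have bl : n - 1 - 1 + 1 = n - 1 := by omega
  have e0 := shiftPerm_apply' h1n π H 0 c0
  have e0' : (π ⟨0 + 1, d1⟩ : ℕ) = (π ⟨1, d1⟩ : ℕ) := fin_app_val_congr π b01
  have e1 := shiftPerm_apply' h1n π H 1 c1
  have e1' : (π ⟨1 + 1, d2⟩ : ℕ) = (π ⟨2, d2⟩ : ℕ) := fin_app_val_congr π b11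
  have e2 := shiftPerm_apply' h1n π H 2 c2
  have e2' : (π ⟨2 + 1, d3⟩ : ℕ) = (π ⟨3, d3⟩ : ℕ) := fin_app_val_congr π b21
  have e3 := shiftPerm_apply' h1n π H 3 c3
  have e3' : (π ⟨3 + 1, d4⟩ : ℕ) = (π ⟨4, d4⟩ : ℕ) := fin_app_val_congr π b31
  have e4 := shiftPerm_apply' h1n π H 4 c4
  have e4' : (π ⟨4 + 1, d5⟩ : ℕ) = (π ⟨5, d5⟩ : ℕ) := fin_app_val_congr π b41
  have g2 := H ⟨2, d2⟩ (by show 1 ≤ 2; omega)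
  have g3 := H ⟨3, d3⟩ (by show 1 ≤ 3; omega)
  have g4 := H ⟨4, d4⟩ (by show 1 ≤ 4; omega)
  have g5 := H ⟨5, d5⟩ (by show 1 ≤ 5; omega)
  refine ⟨shift_bounded _ π H hb, ?_, ?_, ?_⟩
  · rw [forall_fin_eq_iff 0 c0]
    omega
  · rw [forall_fin_eq_iff (n - 1 - 1) cl]
    apply Fin.ext
    have e := shiftPerm_apply' h1n π H (n - 1 - 1) cl
    have e' : (π ⟨n - 1 - 1 + 1, dm⟩ : ℕ) = (π ⟨n - 1, dl⟩ : ℕ) := fin_app_val_congr π bl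
    show _ = n - 1 - 1
    omega
  · intro hJ
    obtain ⟨h5, j0, j1, j2, j3, j4⟩ := hJ
    exact hp2 ⟨by omega, by omega, by omega, by omega⟩

set_option maxHeartbeats 1000000 in
lemma bwdH (n : ℕ) (hn : 6 ≤ n) (σ : Equiv.Perm (Fin (n - 1)))
    (hb : IsKBounded 3 (n - 1) σ)
    (hs : ∀ i : Fin (n - 1), (i : ℕ) = 0 → (σ i : ℕ) = 2)
    (he : ∀ i : Fin (n - 1), (i : ℕ) = n - 1 - 1 → σ i = i)
    (hj : ¬ StartsWithJoker (n - 1) σ) :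
    (IsKBounded 3 n (unshiftPerm (by omega : 1 < n) v1 v1_inj σ) ∧
      IsAnchored n (unshiftPerm (by omega : 1 < n) v1 v1_inj σ)) ∧
    ((unshiftPerm (by omega : 1 < n) v1 v1_inj σ ⟨1, by omega⟩ : ℕ) = 3 ∧
      ¬((unshiftPerm (by omega : 1 < n) v1 v1_inj σ ⟨2, by omega⟩ : ℕ) = 1 ∧
        (unshiftPerm (by omega : 1 < n) v1 v1_inj σ ⟨3, by omega⟩ : ℕ) = 4 ∧
        (unshiftPerm (by omega : 1 < n) v1 v1_inj σ ⟨4, by omega⟩ : ℕ) = 2 ∧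
        (unshiftPerm (by omega : 1 < n) v1 v1_inj σ ⟨5, by omega⟩ : ℕ) = 5)) := by
  have h1n : 1 < n := by omega
  have c0 : 0 < n - 1 := by omega
  have c1 : 1 < n - 1 := by omega
  have c2 : 2 < n - 1 := by omega
  have c3 : 3 < n - 1 := by omega
  have c4 : 4 < n - 1 := by omega
  have cl : n - 1 - 1 < n - 1 := by omega
  have d1 : 1 < n := by omega
  have d2 : 2 < n := by omega
  have d3 : 3 < n := by omega
  have d4 : 4 < n := by omega
  have d5 : 5 < n := by omega
  have dl : n - 1 < n := by omega
  have hs0 : (σ ⟨0, c0⟩ : ℕ) = 2 := hs ⟨0, c0⟩ rfl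
  have hel : (σ ⟨n - 1 - 1, cl⟩ : ℕ) = n - 1 - 1 := congrArg Fin.val (he ⟨n - 1 - 1, cl⟩ rfl)
  have hbd : IsKBounded 3 n (unshiftPerm h1n v1 v1_inj σ) := by
    refine unshift_bounded h1n (by omega) v1 v1_inj σ hb (by intro m hm; omega) ?_
    show ((((σ ⟨0, by omega⟩ : ℕ) + 1 : ℕ) : ℤ) - ((0 : ℕ) : ℤ)).natAbs ≤ 3
    have : (σ ⟨0, by omega⟩ : ℕ) = 2 := hs ⟨0, by omega⟩ rfl
    omega
  have e0 : (unshiftPerm h1n v1 v1_inj σ ⟨0, by omega⟩ : ℕ) = (0 : ℕ) :=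
    unshiftPerm_apply_lt' h1n v1 v1_inj σ 0 (by omega) (by omega)
  have el : (unshiftPerm h1n v1 v1_inj σ ⟨n - 1, dl⟩ : ℕ) = (σ ⟨n - 1 - 1, cl⟩ : ℕ) + 1 :=
    unshiftPerm_apply_ge' h1n v1 v1_inj σ (n - 1) (by omega) dl
  have e1 : (unshiftPerm h1n v1 v1_inj σ ⟨1, d1⟩ : ℕ) = (σ ⟨1 - 1, by omega⟩ : ℕ) + 1 :=
    unshiftPerm_apply_ge' h1n v1 v1_inj σ 1 (by omega) d1
  have e1' : (σ ⟨1 - 1, by omega⟩ : ℕ) = (σ ⟨0, c0⟩ : ℕ) := fin_app_val_congr σ rfl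
  have e2 : (unshiftPerm h1n v1 v1_inj σ ⟨2, d2⟩ : ℕ) = (σ ⟨2 - 1, by omega⟩ : ℕ) + 1 :=
    unshiftPerm_apply_ge' h1n v1 v1_inj σ 2 (by omega) d2
  have e2' : (σ ⟨2 - 1, by omega⟩ : ℕ) = (σ ⟨1, c1⟩ : ℕ) := fin_app_val_congr σ rfl
  have e3 : (unshiftPerm h1n v1 v1_inj σ ⟨3, d3⟩ : ℕ) = (σ ⟨3 - 1, by omega⟩ : ℕ) + 1 :=
    unshiftPerm_apply_ge' h1n v1 v1_inj σ 3 (by omega) d3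
  have e3' : (σ ⟨3 - 1, by omega⟩ : ℕ) = (σ ⟨2, c2⟩ : ℕ) := fin_app_val_congr σ rfl
  have e4 : (unshiftPerm h1n v1 v1_inj σ ⟨4, d4⟩ : ℕ) = (σ ⟨4 - 1, by omega⟩ : ℕ) + 1 :=
    unshiftPerm_apply_ge' h1n v1 v1_inj σ 4 (by omega) d4
  have e4' : (σ ⟨4 - 1, by omega⟩ : ℕ) = (σ ⟨3, c3⟩ : ℕ) := fin_app_val_congr σ rfl
  have e5 : (unshiftPerm h1n v1 v1_inj σ ⟨5, d5⟩ : ℕ) = (σ ⟨5 - 1, by omega⟩ : ℕ) + 1 :=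
    unshiftPerm_apply_ge' h1n v1 v1_inj σ 5 (by omega) d5
  have e5' : (σ ⟨5 - 1, by omega⟩ : ℕ) = (σ ⟨4, c4⟩ : ℕ) := fin_app_val_congr σ rfl
  refine ⟨⟨hbd, ?_⟩, ?_, ?_⟩
  · rw [isAnchored_iff (by omega : 1 ≤ n)]
    exact ⟨e0, by omega⟩
  · omega
  · intro hX
    obtain ⟨hx2, hx3, hx4, hx5⟩ := hX
    refine hj ⟨by omega, ?_, ?_, ?_, ?_, ?_⟩ <;> omega

set_option maxHeartbeats 1000000 in
noncomputable def equivH (n : ℕ) (hn : 6 ≤ n) :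
    {π : Equiv.Perm (Fin n) //
      (IsKBounded 3 n π ∧ IsAnchored n π) ∧ ((π ⟨1, by omega⟩ : ℕ) = 3 ∧
        ¬((π ⟨2, by omega⟩ : ℕ) = 1 ∧ (π ⟨3, by omega⟩ : ℕ) = 4 ∧
          (π ⟨4, by omega⟩ : ℕ) = 2 ∧ (π ⟨5, by omega⟩ : ℕ) = 5))} ≃
    {σ : Equiv.Perm (Fin (n - 1)) // IsKBounded 3 (n - 1) σ ∧
      (∀ i : Fin (n - 1), (i : ℕ) = 0 → (σ i : ℕ) = 2) ∧
      (∀ i : Fin (n - 1), (i : ℕ) = n - 1 - 1 → σ i = i) ∧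
      ¬ StartsWithJoker (n - 1) σ} where
  toFun x := ⟨shiftPerm (by omega : 1 < n) x.1
      (H1 (by omega) x.1 (((isAnchored_iff (by omega) x.1).mp x.2.1.2).1)),
    fwdH n hn x.1 _ x.2.1.1 (((isAnchored_iff (by omega) x.1).mp x.2.1.2).1)
      (((isAnchored_iff (by omega) x.1).mp x.2.1.2).2) x.2.2.1 x.2.2.2⟩
  invFun y := ⟨unshiftPerm (by omega : 1 < n) v1 v1_inj y.1,
    bwdH n hn y.1 y.2.1 y.2.2.1 y.2.2.2.1 y.2.2.2.2⟩
  left_inv x := by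
    apply Subtype.ext
    refine unshift_shift (by omega : 1 < n) x.1
      (H1 (by omega) x.1 (((isAnchored_iff (by omega) x.1).mp x.2.1.2).1)) v1 v1_inj ?_
    intro m hm
    have hm0 : m = 0 := by omega
    subst hm0
    exact ((isAnchored_iff (by omega) x.1).mp x.2.1.2).1
  right_inv y := by
    apply Subtype.ext
    exact shift_unshift (by omega : 1 < n) v1 v1_inj y.1

end Case2

section Case3

def v5 : Fin 5 → Fin 5 := ![0, 3, 1, 4, 2]

lemma v5_inj : Function.Injective v5 := by decide

lemma H5 {n : ℕ} (hn : 6 ≤ n) (π : Equiv.Perm (Fin n))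
    (h0 : (π ⟨0, by omega⟩ : ℕ) = 0) (h1 : (π ⟨1, by omega⟩ : ℕ) = 3)
    (h2 : (π ⟨2, by omega⟩ : ℕ) = 1) (h3 : (π ⟨3, by omega⟩ : ℕ) = 4)
    (h4 : (π ⟨4, by omega⟩ : ℕ) = 2) :
    ∀ i : Fin n, 5 ≤ (i : ℕ) → 5 ≤ (π i : ℕ) := by
  intro i hi
  have n0 := perm_val_ne π (a := i) (b := ⟨0, by omega⟩) (by show (i : ℕ) ≠ 0; omega)
  have n1 := perm_val_ne π (a := i) (b := ⟨1, by omega⟩) (by show (i : ℕ) ≠ 1; omega)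
  have n2 := perm_val_ne π (a := i) (b := ⟨2, by omega⟩) (by show (i : ℕ) ≠ 2; omega)
  have n3 := perm_val_ne π (a := i) (b := ⟨3, by omega⟩) (by show (i : ℕ) ≠ 3; omega)
  have n4 := perm_val_ne π (a := i) (b := ⟨4, by omega⟩) (by show (i : ℕ) ≠ 4; omega)
  omega

set_option maxHeartbeats 1000000 in
lemma fwdJ (n : ℕ) (hn : 6 ≤ n) (π : Equiv.Perm (Fin n))
    (H : ∀ i : Fin n, 5 ≤ (i : ℕ) → 5 ≤ (π i : ℕ))
    (hb : IsKBounded 3 n π)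
    (hl : (π ⟨n - 1, by omega⟩ : ℕ) = n - 1)
    (h5 : (π ⟨5, by omega⟩ : ℕ) = 5) :
    IsKBounded 3 (n - 5) (shiftPerm (by omega : 5 < n) π H) ∧
      IsAnchored (n - 5) (shiftPerm (by omega : 5 < n) π H) := by
  have h5n : 5 < n := by omega
  have c0 : 0 < n - 5 := by omega
  have cl : n - 5 - 1 < n - 5 := by omega
  have d5 : 5 < n := by omega
  have dm : n - 5 - 1 + 5 < n := by omega
  have dl : n - 1 < n := by omega
  refine ⟨shift_bounded h5n π H hb, ?_⟩
  rw [isAnchored_iff (by omega : 1 ≤ n - 5)]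
  constructor
  · have e := shiftPerm_apply' h5n π H 0 c0
    have e' : (π ⟨0 + 5, d5⟩ : ℕ) = (π ⟨5, d5⟩ : ℕ) := fin_app_val_congr π rfl
    omega
  · have e := shiftPerm_apply' h5n π H (n - 5 - 1) cl
    have e' : (π ⟨n - 5 - 1 + 5, dm⟩ : ℕ) = (π ⟨n - 1, dl⟩ : ℕ) :=
      fin_app_val_congr π (by show n - 5 - 1 + 5 = n - 1; omega)
    omega

set_option maxHeartbeats 1000000 in
lemma bwdJ (n : ℕ) (hn : 6 ≤ n) (τ : Equiv.Perm (Fin (n - 5)))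
    (hb : IsKBounded 3 (n - 5) τ) (ha : IsAnchored (n - 5) τ) :
    (IsKBounded 3 n (unshiftPerm (by omega : 5 < n) v5 v5_inj τ) ∧
      IsAnchored n (unshiftPerm (by omega : 5 < n) v5 v5_inj τ)) ∧
    ((unshiftPerm (by omega : 5 < n) v5 v5_inj τ ⟨1, by omega⟩ : ℕ) = 3 ∧
      ((unshiftPerm (by omega : 5 < n) v5 v5_inj τ ⟨2, by omega⟩ : ℕ) = 1 ∧
       (unshiftPerm (by omega : 5 < n) v5 v5_inj τ ⟨3, by omega⟩ : ℕ) = 4 ∧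
       (unshiftPerm (by omega : 5 < n) v5 v5_inj τ ⟨4, by omega⟩ : ℕ) = 2 ∧
       (unshiftPerm (by omega : 5 < n) v5 v5_inj τ ⟨5, by omega⟩ : ℕ) = 5)) := by
  have h5n : 5 < n := by omega
  have c0 : 0 < n - 5 := by omega
  have cl : n - 5 - 1 < n - 5 := by omega
  have cm : n - 1 - 5 < n - 5 := by omega
  have d1 : 1 < n := by omega
  have d2 : 2 < n := by omega
  have d3 : 3 < n := by omega
  have d4 : 4 < n := by omega
  have d5 : 5 < n := by omega
  have dl : n - 1 < n := by omega
  have hτ0 : (τ ⟨0, c0⟩ : ℕ) = 0 := ((isAnchored_iff (by omega : 1 ≤ n - 5) τ).mp ha).1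
  have hτl : (τ ⟨n - 5 - 1, cl⟩ : ℕ) = n - 5 - 1 := ((isAnchored_iff (by omega : 1 ≤ n - 5) τ).mp ha).2
  have hv0 : (v5 ⟨0, by omega⟩ : ℕ) = 0 := rfl
  have hv1 : (v5 ⟨1, by omega⟩ : ℕ) = 3 := rfl
  have hv2 : (v5 ⟨2, by omega⟩ : ℕ) = 1 := rfl
  have hv3 : (v5 ⟨3, by omega⟩ : ℕ) = 4 := rfl
  have hv4 : (v5 ⟨4, by omega⟩ : ℕ) = 2 := rfl
  have hbd : IsKBounded 3 n (unshiftPerm h5n v5 v5_inj τ) := by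
    refine unshift_bounded h5n (by omega) v5 v5_inj τ hb ?_ ?_
    · intro m hm
      have hm4 : m < 4 := by omega
      interval_cases m
      · have a1 : (v5 ⟨0 + 1, hm⟩ : ℕ) = 3 := rfl
        have a0 : (v5 ⟨0, by omega⟩ : ℕ) = 0 := rfl
        omega
      · have a1 : (v5 ⟨1 + 1, hm⟩ : ℕ) = 1 := rfl
        have a0 : (v5 ⟨1, by omega⟩ : ℕ) = 3 := rfl
        omega
      · have a1 : (v5 ⟨2 + 1, hm⟩ : ℕ) = 4 := rfl
        have a0 : (v5 ⟨2, by omega⟩ : ℕ) = 1 := rfl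
        omega
      · have a1 : (v5 ⟨3 + 1, hm⟩ : ℕ) = 2 := rfl
        have a0 : (v5 ⟨3, by omega⟩ : ℕ) = 4 := rfl
        omega
    · show ((((τ ⟨0, by omega⟩ : ℕ) + 5 : ℕ) : ℤ) - ((v5 ⟨5 - 1, by omega⟩ : ℕ) : ℤ)).natAbs ≤ 3
      have hv : (v5 ⟨5 - 1, by omega⟩ : ℕ) = 2 := rfl
      have hτ0' : (τ ⟨0, by omega⟩ : ℕ) = 0 := ((isAnchored_iff (by omega : 1 ≤ n - 5) τ).mp ha).1
      omega
  have e0 : (unshiftPerm h5n v5 v5_inj τ ⟨0, by omega⟩ : ℕ) = (v5 ⟨0, by omega⟩ : ℕ) :=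
    unshiftPerm_apply_lt' h5n v5 v5_inj τ 0 (by omega) (by omega)
  have e1 : (unshiftPerm h5n v5 v5_inj τ ⟨1, d1⟩ : ℕ) = (v5 ⟨1, by omega⟩ : ℕ) :=
    unshiftPerm_apply_lt' h5n v5 v5_inj τ 1 (by omega) d1
  have e2 : (unshiftPerm h5n v5 v5_inj τ ⟨2, d2⟩ : ℕ) = (v5 ⟨2, by omega⟩ : ℕ) :=
    unshiftPerm_apply_lt' h5n v5 v5_inj τ 2 (by omega) d2
  have e3 : (unshiftPerm h5n v5 v5_inj τ ⟨3, d3⟩ : ℕ) = (v5 ⟨3, by omega⟩ : ℕ) :=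
    unshiftPerm_apply_lt' h5n v5 v5_inj τ 3 (by omega) d3
  have e4 : (unshiftPerm h5n v5 v5_inj τ ⟨4, d4⟩ : ℕ) = (v5 ⟨4, by omega⟩ : ℕ) :=
    unshiftPerm_apply_lt' h5n v5 v5_inj τ 4 (by omega) d4
  have e5 : (unshiftPerm h5n v5 v5_inj τ ⟨5, d5⟩ : ℕ) = (τ ⟨5 - 5, by omega⟩ : ℕ) + 5 :=
    unshiftPerm_apply_ge' h5n v5 v5_inj τ 5 (by omega) d5
  have e5' : (τ ⟨5 - 5, by omega⟩ : ℕ) = (τ ⟨0, c0⟩ : ℕ) := fin_app_val_congr τ rfl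
  have el : (unshiftPerm h5n v5 v5_inj τ ⟨n - 1, dl⟩ : ℕ) = (τ ⟨n - 1 - 5, cm⟩ : ℕ) + 5 :=
    unshiftPerm_apply_ge' h5n v5 v5_inj τ (n - 1) (by omega) dl
  have el' : (τ ⟨n - 1 - 5, cm⟩ : ℕ) = (τ ⟨n - 5 - 1, cl⟩ : ℕ) :=
    fin_app_val_congr τ (by show n - 1 - 5 = n - 5 - 1; omega)
  refine ⟨⟨hbd, ?_⟩, by omega, by omega, by omega, by omega, by omega⟩
  rw [isAnchored_iff (by omega : 1 ≤ n)]
  constructor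
  · omega
  · omega

set_option maxHeartbeats 1000000 in
noncomputable def equivJ (n : ℕ) (hn : 6 ≤ n) :
    {π : Equiv.Perm (Fin n) //
      (IsKBounded 3 n π ∧ IsAnchored n π) ∧ ((π ⟨1, by omega⟩ : ℕ) = 3 ∧
        ((π ⟨2, by omega⟩ : ℕ) = 1 ∧ (π ⟨3, by omega⟩ : ℕ) = 4 ∧
          (π ⟨4, by omega⟩ : ℕ) = 2 ∧ (π ⟨5, by omega⟩ : ℕ) = 5))} ≃
    {τ : Equiv.Perm (Fin (n - 5)) // IsKBounded 3 (n - 5) τ ∧ IsAnchored (n - 5) τ} where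
  toFun x := ⟨shiftPerm (by omega : 5 < n) x.1
      (H5 hn x.1 (((isAnchored_iff (by omega) x.1).mp x.2.1.2).1) x.2.2.1
        x.2.2.2.1 x.2.2.2.2.1 x.2.2.2.2.2.1),
    fwdJ n hn x.1 _ x.2.1.1 (((isAnchored_iff (by omega) x.1).mp x.2.1.2).2) x.2.2.2.2.2.2⟩
  invFun y := ⟨unshiftPerm (by omega : 5 < n) v5 v5_inj y.1,
    bwdJ n hn y.1 y.2.1 y.2.2⟩
  left_inv x := by
    apply Subtype.ext
    refine unshift_shift (by omega : 5 < n) x.1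
      (H5 hn x.1 (((isAnchored_iff (by omega) x.1).mp x.2.1.2).1) x.2.2.1
        x.2.2.2.1 x.2.2.2.2.1 x.2.2.2.2.2.1) v5 v5_inj ?_
    intro m hm
    interval_cases m
    · exact ((isAnchored_iff (by omega) x.1).mp x.2.1.2).1
    · exact x.2.2.1
    · exact x.2.2.2.1
    · exact x.2.2.2.2.1
    · exact x.2.2.2.2.2.1
  right_inv y := by
    apply Subtype.ext
    exact shift_unshift (by omega : 5 < n) v5 v5_inj y.1

end Case3

set_option maxHeartbeats 1000000 in
lemma eqG (n : ℕ) (hn : 6 ≤ n) : Nat.card {π : Equiv.Perm (Fin n) //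
      (IsKBounded 3 n π ∧ IsAnchored n π) ∧ (π ⟨1, by omega⟩ : ℕ) ≤ 2} = numG (n - 1) :=
  (Nat.card_congr (equivG n hn)).trans rfl

set_option maxHeartbeats 1000000 in
lemma eqH (n : ℕ) (hn : 6 ≤ n) : Nat.card {π : Equiv.Perm (Fin n) //
      (IsKBounded 3 n π ∧ IsAnchored n π) ∧ ((π ⟨1, by omega⟩ : ℕ) = 3 ∧
        ¬((π ⟨2, by omega⟩ : ℕ) = 1 ∧ (π ⟨3, by omega⟩ : ℕ) = 4 ∧
          (π ⟨4, by omega⟩ : ℕ) = 2 ∧ (π ⟨5, by omega⟩ : ℕ) = 5))} = numH (n - 1) :=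
  (Nat.card_congr (equivH n hn)).trans rfl

set_option maxHeartbeats 1000000 in
lemma eqJ (n : ℕ) (hn : 6 ≤ n) : Nat.card {π : Equiv.Perm (Fin n) //
      (IsKBounded 3 n π ∧ IsAnchored n π) ∧ ((π ⟨1, by omega⟩ : ℕ) = 3 ∧
        ((π ⟨2, by omega⟩ : ℕ) = 1 ∧ (π ⟨3, by omega⟩ : ℕ) = 4 ∧
          (π ⟨4, by omega⟩ : ℕ) = 2 ∧ (π ⟨5, by omega⟩ : ℕ) = 5))} = numF (n - 5) :=
  (Nat.card_congr (equivJ n hn)).trans rfl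

set_option maxHeartbeats 1000000 in
theorem F_recurrence (n : ℕ) (hn : 6 ≤ n) :
    numF n = numG (n - 1) + numH (n - 1) + numF (n - 5) := by
  have key := nat_card_split3 (α := Equiv.Perm (Fin n))
    (fun π => IsKBounded 3 n π ∧ IsAnchored n π)
    (fun π => (π ⟨1, by omega⟩ : ℕ) ≤ 2)
    (fun π => (π ⟨1, by omega⟩ : ℕ) = 3 ∧
        ¬((π ⟨2, by omega⟩ : ℕ) = 1 ∧ (π ⟨3, by omega⟩ : ℕ) = 4 ∧
          (π ⟨4, by omega⟩ : ℕ) = 2 ∧ (π ⟨5, by omega⟩ : ℕ) = 5))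
    (fun π => (π ⟨1, by omega⟩ : ℕ) = 3 ∧
        ((π ⟨2, by omega⟩ : ℕ) = 1 ∧ (π ⟨3, by omega⟩ : ℕ) = 4 ∧
          (π ⟨4, by omega⟩ : ℕ) = 2 ∧ (π ⟨5, by omega⟩ : ℕ) = 5))
    (by
      intro π hπ
      have h0 : (π ⟨0, by omega⟩ : ℕ) = 0 := ((isAnchored_iff (by omega) π).mp hπ.2).1
      have hb := (isKBounded_iff_nat π).mp hπ.1 0 (by omega)
      have e : (π ⟨0 + 1, by omega⟩ : ℕ) = (π ⟨1, by omega⟩ : ℕ) := fin_app_val_congr π rfl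
      by_cases h1 : (π ⟨1, by omega⟩ : ℕ) ≤ 2
      · exact Or.inl h1
      · have h13 : (π ⟨1, by omega⟩ : ℕ) = 3 := by omega
        by_cases hX : ((π ⟨2, by omega⟩ : ℕ) = 1 ∧ (π ⟨3, by omega⟩ : ℕ) = 4 ∧
          (π ⟨4, by omega⟩ : ℕ) = 2 ∧ (π ⟨5, by omega⟩ : ℕ) = 5)
        · exact Or.inr (Or.inr ⟨h13, hX⟩)
        · exact Or.inr (Or.inl ⟨h13, hX⟩))
    (by intro π h1 h2; omega)
    (by intro π h1 h2; omega)
    (by intro π h2 h3; exact h2.2 h3.2)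
  have e0 : numF n = Nat.card {π : Equiv.Perm (Fin n) // IsKBounded 3 n π ∧ IsAnchored n π} := rfl
  rw [e0, key]
  rw [← eqG n hn, ← eqH n hn, ← eqJ n hn]
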